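/- Let β > 0, L ≥ 1, and P₁, …, P_L > 0. The multilabel micro-F_β-measure mF_β(fn, fp) = (1+β²)·Σ_{k=1}^L (P_k − fn_k) / ( (1+β²)·Σ_{k=1}^L P_k + Σ_{k=1}^L (fp_k − fn_k) ), viewed as a function of (fn, fp) ∈ ℝ^L × ℝ^L ≅ ℝ^{2L}, is pseudo-linear on the open convex half-space {(fn, fp) : (1+β²)Σ_k P_k + Σ_k(fp_k − fn_k) > 0}. -/

import Mathlib

open RealInnerProductSpace

/-- A differentiable function `F` is pseudo-convex on `D` if for all `e, e' ∈ D`,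
`F e > F e'` implies `⟪∇F e, e' - e⟫ < 0`. -/
def PseudoConvexOn {E : Type*} [NormedAddCommGroup E] [InnerProductSpace ℝ E]
    [CompleteSpace E] (D : Set E) (F : E → ℝ) : Prop :=
  ∀ e ∈ D, ∀ e' ∈ D, F e > F e' → ⟪gradient F e, e' - e⟫ < 0

/-- `F` is pseudo-linear on `D` if both `F` and `-F` are pseudo-convex on `D`. -/
def PseudoLinearOn {E : Type*} [NormedAddCommGroup E] [InnerProductSpace ℝ E]
    [CompleteSpace E] (D : Set E) (F : E → ℝ) : Prop :=
  PseudoConvexOn D F ∧ PseudoConvexOn D (fun e => -F e)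

/-- The multilabel micro-`F_β`-measure, viewed as a function of the error profile
`(fn, fp) ∈ ℝ^L × ℝ^L ≅ ℝ^{2L}` (here `e (Sum.inl k) = fnₖ` and
`e (Sum.inr k) = fpₖ`), is pseudo-linear on the open half-space where its
denominator is positive. -/
lemma aux_ratio_pseudoConvex {E : Type*} [NormedAddCommGroup E] [InnerProductSpace ℝ E]
    [CompleteSpace E] (N D : E →L[ℝ] ℝ) (n0 d0 : ℝ) :
    PseudoConvexOn {e : E | 0 < d0 + D e} (fun e => (n0 + N e) / (d0 + D e)) := by
  intro e he e' he' hgt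
  simp only [Set.mem_setOf_eq] at he he'
  set f : E → ℝ := fun e => (n0 + N e) / (d0 + D e) with hf
  have h1 : HasFDerivAt (fun y => n0 + N y) (N : E →L[ℝ] ℝ) e := (N.hasFDerivAt).const_add n0
  have h2 : HasFDerivAt (fun y => d0 + D y) (D : E →L[ℝ] ℝ) e := (D.hasFDerivAt).const_add d0
  have hinv : HasFDerivAt (fun y => (d0 + D y)⁻¹)
      ((ContinuousLinearMap.smulRight (1 : ℝ →L[ℝ] ℝ) (-((d0 + D e) ^ 2)⁻¹)).comp D) e :=
    (hasFDerivAt_inv he.ne').comp e h2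
  have hmul : HasFDerivAt f
      ((n0 + N e) • ((ContinuousLinearMap.smulRight (1 : ℝ →L[ℝ] ℝ)
          (-((d0 + D e) ^ 2)⁻¹)).comp D) + N.smulRight (d0 + D e)⁻¹) e := by
    have := h1.mul hinv
    have hfe : f = (fun y => n0 + N y) * fun y => (d0 + D y)⁻¹ := by
      funext y; simp only [hf, Pi.mul_apply, div_eq_mul_inv]
    rw [hfe]
    exact this.congr_fderiv (by ext v; simp [mul_comm])
  have hfd : fderiv ℝ f e = _ := hmul.fderiv
  have hip : ⟪gradient f e, e' - e⟫ = fderiv ℝ f e (e' - e) := by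
    rw [gradient]
    exact InnerProductSpace.toDual_symm_apply
  rw [hip, hfd]
  have hNe : N (e' - e) = N e' - N e := by simp
  have hDe : D (e' - e) = D e' - D e := by simp
  simp only [ContinuousLinearMap.add_apply, ContinuousLinearMap.smul_apply,
    ContinuousLinearMap.comp_apply, ContinuousLinearMap.smulRight_apply,
    ContinuousLinearMap.one_apply, hNe, hDe, smul_eq_mul]
  have hkey : (n0 + N e') * (d0 + D e) < (n0 + N e) * (d0 + D e') :=
    (div_lt_div_iff₀ he' he).mp hgt
  have h2' : (0:ℝ) < (d0 + D e)^2 := by positivity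
  have heq : (n0 + N e) * ((D e' - D e) * -((d0 + D e) ^ 2)⁻¹) + (N e' - N e) * (d0 + D e)⁻¹
      = ((n0 + N e') * (d0 + D e) - (n0 + N e) * (d0 + D e')) / (d0 + D e) ^ 2 := by
    field_simp
    ring
  rw [heq]
  exact div_neg_of_neg_of_pos (by linarith) h2'

theorem multilabel_micro_Fbeta_pseudoLinear (β : ℝ) (hβ : 0 < β)
    (L : ℕ) (hL : 1 ≤ L) (P : Fin L → ℝ) (hP : ∀ k, 0 < P k) :
    PseudoLinearOn
      {e : EuclideanSpace ℝ (Fin L ⊕ Fin L) |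
        (1 + β ^ 2) * (∑ k, P k) +
          ∑ k : Fin L, (e (Sum.inr k) - e (Sum.inl k)) > 0}
      (fun e =>
        (1 + β ^ 2) * (∑ k : Fin L, (P k - e (Sum.inl k))) /
          ((1 + β ^ 2) * (∑ k, P k) +
            ∑ k : Fin L, (e (Sum.inr k) - e (Sum.inl k)))) := by
  set c : ℝ := 1 + β ^ 2 with hc
  set S : ℝ := ∑ k, P k with hS
  set A : EuclideanSpace ℝ (Fin L ⊕ Fin L) →L[ℝ] ℝ :=
    ∑ k : Fin L, EuclideanSpace.proj (Sum.inl k) with hAdef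
  set B : EuclideanSpace ℝ (Fin L ⊕ Fin L) →L[ℝ] ℝ :=
    ∑ k : Fin L, EuclideanSpace.proj (Sum.inr k) with hBdef
  have hA : ∀ e, A e = ∑ k : Fin L, e (Sum.inl k) := by
    intro e; simp [hAdef, ContinuousLinearMap.sum_apply]
  have hB : ∀ e, B e = ∑ k : Fin L, e (Sum.inr k) := by
    intro e; simp [hBdef, ContinuousLinearMap.sum_apply]
  set Nmap : EuclideanSpace ℝ (Fin L ⊕ Fin L) →L[ℝ] ℝ := -(c • A) with hNdef
  set Dmap : EuclideanSpace ℝ (Fin L ⊕ Fin L) →L[ℝ] ℝ := B - A with hDdef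
  have hNum : ∀ e : EuclideanSpace ℝ (Fin L ⊕ Fin L),
      c * (∑ k : Fin L, (P k - e (Sum.inl k))) = c * S + Nmap e := by
    intro e
    simp only [hNdef, ContinuousLinearMap.neg_apply, ContinuousLinearMap.smul_apply,
      smul_eq_mul, hA, Finset.sum_sub_distrib, mul_sub, hS]
    ring
  have hDen : ∀ e : EuclideanSpace ℝ (Fin L ⊕ Fin L),
      c * S + ∑ k : Fin L, (e (Sum.inr k) - e (Sum.inl k)) = c * S + Dmap e := by
    intro e
    simp only [hDdef, ContinuousLinearMap.sub_apply, hA, hB, Finset.sum_sub_distrib]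
  have hSet : {e : EuclideanSpace ℝ (Fin L ⊕ Fin L) |
        c * S + ∑ k : Fin L, (e (Sum.inr k) - e (Sum.inl k)) > 0}
      = {e : EuclideanSpace ℝ (Fin L ⊕ Fin L) | 0 < c * S + Dmap e} := by
    ext e; simp only [Set.mem_setOf_eq, gt_iff_lt, hDen e]
  constructor
  · have hFun : (fun e : EuclideanSpace ℝ (Fin L ⊕ Fin L) =>
        c * (∑ k : Fin L, (P k - e (Sum.inl k))) /
          (c * S + ∑ k : Fin L, (e (Sum.inr k) - e (Sum.inl k))))
        = fun e => (c * S + Nmap e) / (c * S + Dmap e) := by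
      funext e; rw [hNum e, hDen e]
    rw [hSet, hFun]
    exact aux_ratio_pseudoConvex Nmap Dmap (c * S) (c * S)
  · have hFun : (fun e : EuclideanSpace ℝ (Fin L ⊕ Fin L) =>
        -(c * (∑ k : Fin L, (P k - e (Sum.inl k))) /
          (c * S + ∑ k : Fin L, (e (Sum.inr k) - e (Sum.inl k)))))
        = fun e => ((-(c * S)) + (-Nmap) e) / (c * S + Dmap e) := by
      funext e
      rw [hNum e, hDen e, ← neg_div]
      simp only [ContinuousLinearMap.neg_apply]
      ring
    rw [hSet]
    have := aux_ratio_pseudoConvex (-Nmap) Dmap (-(c * S)) (c * S)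
    rw [← hFun] at this
    exact this
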